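/- For every 0 ≤ t < ∞ and every compact subset K ⊂ S, the functions ρ̃_{t,K} and ρ_{t,K} are pseudo-metrics on D_exp(S); in particular each satisfies the triangle inequality. -/

import Mathlib

open Filter Topology Set MeasureTheory
open scoped ENNReal NNReal

noncomputable section

namespace LocSkor

/-- Paths with values in the one-point compactification. -/
abbrev Path (S : Type*) := ℝ → OnePoint S

variable {S : Type*} [TopologicalSpace S]

/-- Distance between two points of `S^Δ`, with junk value `0` if one of them is `Δ`. -/
noncomputable def dd (ρ : S → S → ℝ) : OnePoint S → OnePoint S → ℝ :=
  fun a b => Option.elim (show Option S from a) 0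
    (fun a' => Option.elim (show Option S from b) 0 (fun b' => ρ a' b'))

/-- The set of times at which the path has already exploded. -/
def xiSet (x : Path S) : Set ℝ := {t : ℝ | x t = OnePoint.infty}

/-- The path explodes in finite time, i.e. `ξ(x) < ∞`. -/
def explodes (x : Path S) : Prop := (xiSet x).Nonempty

/-- The (real-valued) explosion time `ξ(x)`; junk value `0` if the path never explodes. -/
def xiR (x : Path S) : ℝ := sInf (xiSet x)

/-- The `[0,∞]`-valued explosion time `ξ(x)`. -/
def xiE (x : Path S) : ℝ≥0∞ := ⨅ t ∈ xiSet x, ENNReal.ofReal t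

/-- The range `{x_s, 0 ≤ s < ξ(x)}` of the path, as a subset of `S`. -/
def pathRange (x : Path S) : Set S := {a : S | ∃ s : ℝ, 0 ≤ s ∧ x s = (a : OnePoint S)}

/-- `x` is an exploding cadlag path: `x_t = Δ` exactly for `t ≥ ξ(x)` (and we normalize
`x` on negative times), `x` is right-continuous before explosion, and has left limits in `S`
at every point of `(0, ξ(x))`. -/
def IsDexp (x : Path S) : Prop :=
  (∀ t ≤ (0:ℝ), x t = x 0) ∧
  (∀ ⦃s t : ℝ⦄, s ≤ t → x s = OnePoint.infty → x t = OnePoint.infty) ∧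
  IsClosed (xiSet x) ∧
  (∀ t : ℝ, 0 ≤ t → x t ≠ OnePoint.infty → Tendsto x (𝓝[>] t) (𝓝 (x t))) ∧
  (∀ t : ℝ, 0 < t → x t ≠ OnePoint.infty →
    ∃ a : S, Tendsto x (𝓝[<] t) (𝓝 (a : OnePoint S)))

/-- `x` belongs to the local cadlag space `𝔻_loc(S)`. -/
def IsDloc (x : Path S) : Prop :=
  IsDexp x ∧
  ((explodes x ∧ 0 < xiR x ∧ IsCompact (closure (pathRange x))) →
    ∃ a : S, Tendsto x (𝓝[<] xiR x) (𝓝 (a : OnePoint S)))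

/-- `x` belongs to the global cadlag space `𝔻(S)`, i.e. `ξ(x) = ∞`. -/
def IsDglob (x : Path S) : Prop := IsDexp x ∧ ∀ t : ℝ, x t ≠ OnePoint.infty

/-- `x` is a cadlag path with values in the compact space `S^Δ`, i.e. `x ∈ 𝔻(S^Δ)`. -/
def IsCadlagDelta (x : Path S) : Prop :=
  (∀ t ≤ (0:ℝ), x t = x 0) ∧
  (∀ t : ℝ, 0 ≤ t → Tendsto x (𝓝[>] t) (𝓝 (x t))) ∧
  (∀ t : ℝ, 0 < t → ∃ a : OnePoint S, Tendsto x (𝓝[<] t) (𝓝 a))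

/-- The space `𝔻_exp(S)` of exploding cadlag paths. -/
def DexpT (S : Type*) [TopologicalSpace S] : Type _ := {x : Path S // IsDexp x}

/-- The space `𝔻_loc(S)`. -/
def DlocT (S : Type*) [TopologicalSpace S] : Type _ := {x : Path S // IsDloc x}

/-- The space `𝔻(S)`. -/
def DglobT (S : Type*) [TopologicalSpace S] : Type _ := {x : Path S // IsDglob x}

/-- The space `𝔻(S^Δ)`. -/
def DDeltaT (S : Type*) [TopologicalSpace S] : Type _ := {x : Path S // IsCadlagDelta x}

/-! ### Time changes `Λ̃` and `Λ` -/

/-- `l` is an increasing bijection of `ℝ₊` (extended by the identity on negative reals):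
the class `Λ̃`. -/
def IsTimeBij (l : ℝ → ℝ) : Prop :=
  StrictMono l ∧ Function.Surjective l ∧ ∀ t ≤ (0:ℝ), l t = t

/-- `‖log λ̇‖_t ≤ ε`, expressed through slopes. -/
def LogSlopeLe (l : ℝ → ℝ) (t ε : ℝ) : Prop :=
  ∀ s₁ s₂ : ℝ, 0 ≤ s₁ → s₁ < s₂ → s₂ ≤ t → |Real.log ((l s₂ - l s₁) / (s₂ - s₁))| ≤ ε

/-- `‖λ - id‖_t ≤ ε`. -/
def IdDistLe (l : ℝ → ℝ) (t ε : ℝ) : Prop := ∀ s : ℝ, 0 ≤ s → s ≤ t → |l s - s| ≤ ε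

/-- `l` belongs to the class `Λ` of increasing bijections of `ℝ₊` which are locally
Lipschitz together with their inverses (equivalently, `‖log λ̇‖_t < ∞` for all `t`). -/
def IsLipTimeBij (l : ℝ → ℝ) : Prop :=
  IsTimeBij l ∧ ∀ t : ℝ, 0 < t → ∃ C : ℝ, LogSlopeLe l t C

/-- `ξ(x) < ∞` together with the relative compactness in `S` of `{x_s, s < ξ(x)}`. -/
def Case1 (x : Path S) : Prop := explodes x ∧ IsCompact (closure (pathRange x))

/-- Convergence criterion of Theorem 2.6, parametrized by the class of time changes and
by the norm used on them. -/
def ConvGen (ρ : S → S → ℝ) (Lam : (ℝ → ℝ) → Prop) (Nrm : (ℝ → ℝ) → ℝ → ℝ → Prop)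
    (xk : ℕ → Path S) (x : Path S) : Prop :=
  ∃ l : ℕ → ℝ → ℝ, (∀ k, Lam (l k)) ∧
    (Case1 x →
      ((∀ᶠ k in atTop, ∀ s : ℝ, 0 ≤ s → s < l k (xiR x) → xk k s ≠ OnePoint.infty) ∧
      (∀ ε > (0:ℝ), ∀ᶠ k in atTop, ∀ s : ℝ, 0 ≤ s → s < xiR x →
        dd ρ (x s) (xk k (l k s)) ≤ ε) ∧
      Tendsto (fun k => xk k (l k (xiR x))) atTop (𝓝 (OnePoint.infty : OnePoint S)) ∧
      (∀ ε > (0:ℝ), ∀ᶠ k in atTop, Nrm (l k) (xiR x) ε))) ∧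
    (¬ Case1 x →
      ∀ t : ℝ, 0 ≤ t → x t ≠ OnePoint.infty →
        ((∀ᶠ k in atTop, xk k (l k t) ≠ OnePoint.infty) ∧
        (∀ ε > (0:ℝ), ∀ᶠ k in atTop, ∀ s : ℝ, 0 ≤ s → s ≤ t →
          dd ρ (x s) (xk k (l k s)) ≤ ε) ∧
        (∀ ε > (0:ℝ), ∀ᶠ k in atTop, Nrm (l k) t ε)))

/-- Convergence criterion of Theorem 2.6 (with `Λ` and `‖log λ̇‖`). -/
def ConvLoc (ρ : S → S → ℝ) (xk : ℕ → Path S) (x : Path S) : Prop :=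
  ConvGen ρ IsLipTimeBij LogSlopeLe xk x

/-- Convergence criterion of Theorem 2.7 (with `Λ̃` and `‖λ - id‖`). -/
def ConvLocTilde (ρ : S → S → ℝ) (xk : ℕ → Path S) (x : Path S) : Prop :=
  ConvGen ρ IsTimeBij IdDistLe xk x

/-! ### σ-algebras -/

/-- The Borel σ-algebra of `S^Δ`. -/
def msOP (S : Type*) [TopologicalSpace S] : MeasurableSpace (OnePoint S) := borel _

/-- The σ-algebra `𝓕_t = σ(X_s, 0 ≤ s ≤ t)`. -/
def filt {α : Type*} (ev : α → Path S) (t : ℝ) : MeasurableSpace α :=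
  ⨆ s ∈ Icc (0:ℝ) t, MeasurableSpace.comap (fun x => ev x s) (msOP S)

/-- The σ-algebra `𝓕_{t-} = σ(X_s, 0 ≤ s < t)`. -/
def filtLt {α : Type*} (ev : α → Path S) (t : ℝ) : MeasurableSpace α :=
  ⨆ s ∈ Ico (0:ℝ) t, MeasurableSpace.comap (fun x => ev x s) (msOP S)

/-- The σ-algebra `𝓕 = σ(X_s, 0 ≤ s < ∞)`. -/
def filtAll {α : Type*} (ev : α → Path S) : MeasurableSpace α :=
  ⨆ s ∈ Ici (0:ℝ), MeasurableSpace.comap (fun x => ev x s) (msOP S)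

/-- The σ-algebra `𝓕_{t+} = ⋂_{s>t} 𝓕_s`. -/
def filtPlus {α : Type*} (ev : α → Path S) (t : ℝ) : MeasurableSpace α :=
  ⨅ s ∈ Ioi t, filt ev s

/-- `τ` is an `(𝓕_t)`-stopping time. -/
def IsStopping {α : Type*} (ev : α → Path S) (τ : α → ℝ≥0∞) : Prop :=
  ∀ t : ℝ, 0 ≤ t → MeasurableSet[filt ev t] {x | τ x ≤ ENNReal.ofReal t}

open Classical in
/-- Evaluation of a path at a `[0,∞]`-valued time (`Δ` at time `∞`). -/
def evalE (x : Path S) (t : ℝ≥0∞) : OnePoint S :=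
  if t = ⊤ then OnePoint.infty else x t.toReal

open Classical in
/-- The left limit `x_{t-}`, junk value `Δ` if it does not exist. -/
def leftLimVal (x : Path S) (t : ℝ) : OnePoint S :=
  if h : ∃ a : OnePoint S, Tendsto x (𝓝[<] t) (𝓝 a) then h.choose else OnePoint.infty

/-- The exit time `τ^U = inf {t ≥ 0 | X_{t-} ∉ U or X_t ∉ U}`. -/
def tauU (U : Set S) (x : Path S) : ℝ≥0∞ :=
  ⨅ t ∈ {t : ℝ | 0 ≤ t ∧
      ((0 < t ∧ ¬ ∃ a ∈ U, Tendsto x (𝓝[<] t) (𝓝 (a : OnePoint S))) ∨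
        ¬ ∃ a ∈ U, x t = (a : OnePoint S))},
    ENNReal.ofReal t

/-! ### The modulus `ω'` -/

/-- The modulus of continuity `ω'_{t,K,x}(δ)` of (2.5), with values in `[0,∞]`. -/
def omegaMod (ρ : S → S → ℝ) (t : ℝ) (K : Set S) (x : Path S) (δ : ℝ) : ℝ≥0∞ :=
  ⨅ (p : ℕ × (ℕ → ℝ)) (_ : p.2 0 = 0 ∧ (∀ i < p.1, p.2 i + δ < p.2 (i + 1)) ∧
      (∀ s : ℝ, 0 ≤ s → s < p.2 p.1 → x s ≠ OnePoint.infty) ∧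
      ¬ (p.2 p.1 ≤ t ∧ ∃ a ∈ K, x (p.2 p.1) = (a : OnePoint S))),
    ⨆ (i : ℕ) (_ : i < p.1) (s₁ : ℝ) (_ : p.2 i ≤ s₁ ∧ s₁ < p.2 (i + 1))
      (s₂ : ℝ) (_ : p.2 i ≤ s₂ ∧ s₂ < p.2 (i + 1)),
      ENNReal.ofReal (dd ρ (x s₁) (x s₂))

/-! ### Skorokhod pseudo-metrics -/

open Classical in
/-- The penalty term `d(x_{t₁}, K^c) ∧ (t - t₁)_+ 𝟙_{t₁ < ξ(x)}` appearing in the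
definition of the pseudo-metrics (with the convention `d(a, ∅) = +∞`). -/
noncomputable def pen (ρ : S → S → ℝ) (t : ℝ) (K : Set S) (x : Path S) (t₁ : ℝ) : ℝ :=
  Option.elim (show Option S from x t₁) 0 (fun a =>
    if (Kᶜ : Set S).Nonempty then min (sInf ((fun b => ρ a b) '' (Kᶜ : Set S))) (max (t - t₁) 0)
    else max (t - t₁) 0)

open Classical in
/-- The set of admissible bounds in the definition of `ρ̃_{t,K}` (`useLip = false`) and of
`ρ_{t,K}` (`useLip = true`). -/
def rhoSet (useLip : Bool) (ρ : S → S → ℝ) (t : ℝ) (K : Set S) (x y : Path S) : Set ℝ :=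
  {r : ℝ | 0 ≤ r ∧ ∃ t₁ t₂ : ℝ, ∃ l : ℝ → ℝ, 0 ≤ t₁ ∧ 0 ≤ t₂ ∧ l t₁ = t₂ ∧
    (if useLip then IsLipTimeBij l else IsTimeBij l) ∧
    (∀ s : ℝ, 0 ≤ s → s < t₁ → x s ≠ OnePoint.infty) ∧
    (∀ s : ℝ, 0 ≤ s → s < t₂ → y s ≠ OnePoint.infty) ∧
    (∀ s : ℝ, 0 ≤ s → s < t₁ → dd ρ (x s) (y (l s)) ≤ r) ∧
    IdDistLe l t₁ r ∧
    (useLip = true → LogSlopeLe l t₁ r) ∧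
    pen ρ t K x t₁ ≤ r ∧ pen ρ t K y t₂ ≤ r}

/-- The pseudo-metric `ρ̃_{t,K}`. -/
noncomputable def rhoTilde (ρ : S → S → ℝ) (t : ℝ) (K : Set S) (x y : Path S) : ℝ :=
  sInf (rhoSet false ρ t K x y)

/-- The pseudo-metric `ρ_{t,K}`. -/
noncomputable def rhoMet (ρ : S → S → ℝ) (t : ℝ) (K : Set S) (x y : Path S) : ℝ :=
  sInf (rhoSet true ρ t K x y)

/-! ### Time change -/

/-- `g ∈ C^{≠0}(S, ℝ₊)`: `{g = 0}` is closed and `g` is continuous on `{g ≠ 0}`. -/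
def Czero (g : S → ℝ) : Prop :=
  (∀ a : S, 0 ≤ g a) ∧ IsClosed {a : S | g a = 0} ∧ ContinuousOn g {a : S | g a ≠ 0}

/-- `g ∈ C̃^{≠0}(S, ℝ₊)`: moreover `g` is bounded on every compact subset of `S`. -/
def CzeroLocBdd (g : S → ℝ) : Prop :=
  Czero g ∧ ∀ K : Set S, IsCompact K → ∃ C : ℝ, ∀ a ∈ K, g a ≤ C

/-- `g` extended to `S^Δ` by the junk value `0` at `Δ`. -/
def gOP (g : S → ℝ) : OnePoint S → ℝ := fun a => Option.elim (show Option S from a) 0 g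

open Classical in
/-- The additive functional `A^g_t(x) = ∫_0^t du / g(x_u)` for `t ∈ [0, τ^{{g≠0}}(x)]`,
and `+∞` otherwise. -/
noncomputable def Ag (g : S → ℝ) (x : Path S) (t : ℝ) : ℝ≥0∞ :=
  if 0 ≤ t ∧ ENNReal.ofReal t ≤ tauU {a : S | g a ≠ 0} x then
    ∫⁻ u in Ioo (0:ℝ) t, (ENNReal.ofReal (gOP g (x u)))⁻¹
  else ⊤

/-- The time change `τ^g_t(x) = inf {s ≥ 0 | A^g_s(x) ≥ t}`, for `t ∈ [0,∞]`. -/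
noncomputable def taug (g : S → ℝ) (x : Path S) (t : ℝ≥0∞) : ℝ≥0∞ :=
  ⨅ s ∈ {s : ℝ | 0 ≤ s ∧ t ≤ Ag g x s}, ENNReal.ofReal s

/-- The total mass `A^g_{τ^g_∞(x)}(x) = ∫_0^{τ^{{g≠0}}(x)} du / g(x_u)`. -/
noncomputable def Atotal (g : S → ℝ) (x : Path S) : ℝ≥0∞ :=
  ∫⁻ u in {u : ℝ | 0 < u ∧ ENNReal.ofReal u ≤ tauU {a : S | g a ≠ 0} x},
    (ENNReal.ofReal (gOP g (x u)))⁻¹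

/-- The filter of times converging to `t ∈ [0,∞]` from the left. -/
noncomputable def leftFilter (t : ℝ≥0∞) : Filter ℝ := if t = ⊤ then atTop else 𝓝[<] t.toReal

open Classical in
/-- The left limit `x_{t-}` at a `[0,∞]`-valued time, junk value `Δ` if it does not exist. -/
noncomputable def leftLimValE (x : Path S) (t : ℝ≥0∞) : OnePoint S :=
  if h : ∃ a : OnePoint S, Tendsto x (leftFilter t) (𝓝 a) then h.choose else OnePoint.infty

open Classical in
/-- The time-changed path `g·x` of Definition 3.1.  -/
noncomputable def timeChange (g : S → ℝ) (x : Path S) : Path S := fun t =>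
  if 0 ≤ t ∧ Atotal g x ≤ ENNReal.ofReal t ∧
      ∃ a : S, g a = 0 ∧ Tendsto x (leftFilter (tauU {b : S | g b ≠ 0} x)) (𝓝 (a : OnePoint S))
  then leftLimValE x (tauU {b : S | g b ≠ 0} x)
  else evalE x (taug g x (ENNReal.ofReal t))

/-- The constant path equal to `Δ`. -/
def deadPath (S : Type*) [TopologicalSpace S] : Path S := fun _ => OnePoint.infty

lemma isDexp_deadPath : IsDexp (deadPath S) := by
  refine ⟨fun _ _ => rfl, fun _ _ _ _ => rfl, ?_, ?_, ?_⟩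
  · have : xiSet (deadPath S) = univ := by ext t; simp [xiSet, deadPath]
    rw [this]; exact isClosed_univ
  · intro t _ h; exact absurd rfl h
  · intro t _ h; exact absurd rfl h

lemma isDloc_deadPath : IsDloc (deadPath S) := by
  refine ⟨isDexp_deadPath, ?_⟩
  rintro ⟨-, hxi, -⟩
  exfalso
  have huniv : xiSet (deadPath S) = univ := by ext t; simp [xiSet, deadPath]
  have : xiR (deadPath S) = 0 := by
    rw [xiR, huniv]
    exact Real.sInf_of_not_bddBelow (by simp [not_bddBelow_univ (α := ℝ)])
  rw [this] at hxi; exact lt_irrefl 0 hxi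

lemma isCadlagDelta_deadPath : IsCadlagDelta (deadPath S) :=
  ⟨fun _ _ => rfl, fun _ _ => tendsto_const_nhds, fun _ _ => ⟨OnePoint.infty, tendsto_const_nhds⟩⟩

open Classical in
/-- Packaging of a raw path as an element of `𝔻_loc(S)` (junk value if it is not one). -/
noncomputable def toDloc (y : Path S) : DlocT S :=
  if h : IsDloc y then ⟨y, h⟩ else ⟨deadPath S, isDloc_deadPath⟩

open Classical in
/-- Packaging of a raw path as an element of `𝔻(S^Δ)` (junk value if it is not one). -/
noncomputable def toDDelta (y : Path S) : DDeltaT S :=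
  if h : IsCadlagDelta y then ⟨y, h⟩ else ⟨deadPath S, isCadlagDelta_deadPath⟩

/-- Condition defining the continuity set `B` of Theorem 3.3, for a pair `(g, x)`. -/
def BCond (g : S → ℝ) (x : Path S) : Prop :=
  (tauU {a : S | g a ≠ 0} x < xiE x →
    ∀ t : ℝ, tauU {a : S | g a ≠ 0} x < ENNReal.ofReal t →
      ∫⁻ u in Ioo (0:ℝ) t, (ENNReal.ofReal (gOP g (x u)))⁻¹ = ⊤) ∧
  (Atotal g x < ⊤ →
    ∀ a : S, tauU {a : S | g a ≠ 0} x ≠ ⊤ →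
      Tendsto x (𝓝[<] (tauU {a : S | g a ≠ 0} x).toReal) (𝓝 (a : OnePoint S)) →
      g a = 0 → x ((tauU {a : S | g a ≠ 0} x).toReal) = (a : OnePoint S))

/-- `x_{ξ(x)-}` exists in `U` whenever `0 < ξ(x) < ∞`. -/
def limExistsIn (U : Set S) (y : Path S) : Prop :=
  (explodes y ∧ 0 < xiR y) → ∃ a ∈ U, Tendsto y (𝓝[<] xiR y) (𝓝 (a : OnePoint S))

/-! ### Global Skorokhod convergence -/

/-- Convergence in the global Skorokhod topology of `𝔻(S)` (Corollary 2.7). -/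
def ConvGlob (ρ : S → S → ℝ) (xk : ℕ → Path S) (x : Path S) : Prop :=
  ∃ l : ℕ → ℝ → ℝ, (∀ k, IsLipTimeBij (l k)) ∧ ∀ t : ℝ, 0 ≤ t →
    (∀ ε > (0:ℝ), ∀ᶠ k in atTop, ∀ s : ℝ, 0 ≤ s → s ≤ t → dd ρ (x s) (xk k (l k s)) ≤ ε) ∧
    (∀ ε > (0:ℝ), ∀ᶠ k in atTop, LogSlopeLe (l k) t ε)

/-- Convergence in the global Skorokhod topology of `𝔻(S^Δ)`, written with entourages of the
(unique) uniformity of the compact space `S^Δ` (equivalently, with any compatible metric). -/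
def ConvGlobDelta (xk : ℕ → Path S) (x : Path S) : Prop :=
  ∃ l : ℕ → ℝ → ℝ, (∀ k, IsTimeBij (l k)) ∧ ∀ t : ℝ, 0 ≤ t →
    (∀ V ∈ 𝓝ˢ (Set.diagonal (OnePoint S)), ∀ᶠ k in atTop,
      ∀ s : ℝ, 0 ≤ s → s ≤ t → ((x s, xk k (l k s)) : OnePoint S × OnePoint S) ∈ V) ∧
    (∀ ε > (0:ℝ), ∀ᶠ k in atTop, IdDistLe (l k) t ε)

/-! ### Markov families -/

/-- The shifted path `(X_{t₀+t})_{t≥0}`, at a `[0,∞]`-valued time `t₀`. -/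
noncomputable def shiftE (x : Path S) (t₀ : ℝ≥0∞) : Path S := fun t =>
  if t₀ = ⊤ then OnePoint.infty else x (t₀.toReal + max t 0)

/-- Conditions a), b) in the definition of a Markov family (together with the
normalisation `P_Δ(ξ = 0) = 1`). -/
def MarkovBase {α : Type*} (ev : α → Path S)
    (P : OnePoint S → @Measure α (filtAll ev)) : Prop :=
  (∀ a : OnePoint S, @IsProbabilityMeasure α (filtAll ev) (P a)) ∧
  (∀ B : Set α, MeasurableSet[filtAll ev] B →
    @Measurable S ℝ≥0∞ (borel S) inferInstance (fun a : S => P (a : OnePoint S) B)) ∧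
  (∀ a : S, P (a : OnePoint S) {x | ev x 0 = (a : OnePoint S)} = 1) ∧
  (P OnePoint.infty {x | ev x 0 = OnePoint.infty} = 1)

/-- Condition c) in the definition of a `(𝓖_t)`-Markov family. -/
def MarkovProp {α : Type*} (ev : α → Path S) (G : ℝ → MeasurableSpace α)
    (P : OnePoint S → @Measure α (filtAll ev)) : Prop :=
  ∀ (a : OnePoint S) (t₀ : ℝ), 0 ≤ t₀ →
    ∀ B : Set (Path S), MeasurableSet[filtAll (id : Path S → Path S)] B →
      ∀ A : Set α, MeasurableSet[G t₀] A →
        P a (A ∩ {x | (fun t => ev x (t₀ + max t 0)) ∈ B}) =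
          ∫⁻ x in A, P (ev x t₀) {y | ev y ∈ B} ∂(P a)

/-- Condition c) for a `(𝓖_t)`-strong Markov family: the Markov property at every
`(𝓖_t)`-stopping time. -/
def StrongMarkovProp {α : Type*} (ev : α → Path S) (G : ℝ → MeasurableSpace α)
    (P : OnePoint S → @Measure α (filtAll ev)) : Prop :=
  ∀ (a : OnePoint S) (τ : α → ℝ≥0∞),
    (∀ t : ℝ, 0 ≤ t → MeasurableSet[G t] {x | τ x ≤ ENNReal.ofReal t}) →
    ∀ B : Set (Path S), MeasurableSet[filtAll (id : Path S → Path S)] B →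
      ∀ A : Set α, MeasurableSet[filtAll ev] A →
        (∀ t : ℝ, 0 ≤ t → MeasurableSet[G t] (A ∩ {x | τ x ≤ ENNReal.ofReal t})) →
        P a (A ∩ {x | shiftE (ev x) (τ x) ∈ B}) =
          ∫⁻ x in A, P (evalE (ev x) (τ x)) {y | ev y ∈ B} ∂(P a)

/-! ### Auxiliary lemmas for Lemma 4.1 -/

section PseudoMetric

variable {S : Type*} [MetricSpace S]

lemma dd_coe' (a b : S) : dd dist (a : OnePoint S) (b : OnePoint S) = dist a b := rfl

lemma dd_comm' (a b : OnePoint S) : dd dist a b = dd dist b a := by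
  rcases a with _ | a <;> rcases b with _ | b <;> simp [dd, dist_comm]

lemma dd_self' (a : OnePoint S) : dd dist a a = 0 := by
  rcases a with _ | a <;> simp [dd]

lemma ne_infty_exists {a : OnePoint S} (h : a ≠ OnePoint.infty) :
    ∃ b : S, a = (b : OnePoint S) := by
  rcases a with _ | b
  · exact absurd rfl h
  · exact ⟨b, rfl⟩

lemma dd_triangle' {a b c : OnePoint S} (ha : a ≠ OnePoint.infty) (hb : b ≠ OnePoint.infty)
    (hc : c ≠ OnePoint.infty) : dd dist a c ≤ dd dist a b + dd dist b c := by
  obtain ⟨a', rfl⟩ := ne_infty_exists ha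
  obtain ⟨b', rfl⟩ := ne_infty_exists hb
  obtain ⟨c', rfl⟩ := ne_infty_exists hc
  simpa [dd_coe'] using dist_triangle a' b' c'

lemma logSlopeLe_id (T : ℝ) : LogSlopeLe id T 0 := by
  intro s₁ s₂ h1 h2 h3
  rw [show (id s₂ - id s₁) / (s₂ - s₁) = 1 from div_self (sub_ne_zero.mpr h2.ne')]
  simp

lemma isLipTimeBij_id : IsLipTimeBij (id : ℝ → ℝ) :=
  ⟨⟨strictMono_id, Function.surjective_id, fun _ _ => rfl⟩, fun T _ => ⟨0, logSlopeLe_id T⟩⟩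

lemma LogSlopeLe.mono_left {l : ℝ → ℝ} {T T' C : ℝ} (h : LogSlopeLe l T C) (hT : T' ≤ T) :
    LogSlopeLe l T' C := fun s₁ s₂ h1 h2 h3 => h s₁ s₂ h1 h2 (h3.trans hT)

lemma logSlopeLe_comp {l m : ℝ → ℝ} {T C₁ C₂ : ℝ}
    (hl : StrictMono l) (hm : StrictMono m) (hl0 : l 0 = 0)
    (h₁ : LogSlopeLe l T C₁) (h₂ : LogSlopeLe m (l T) C₂) :
    LogSlopeLe (m ∘ l) T (C₁ + C₂) := by
  intro s₁ s₂ hs₁ hlt hle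
  have hls₁ : 0 ≤ l s₁ := hl0 ▸ hl.monotone hs₁
  have hllt : l s₁ < l s₂ := hl hlt
  have hlle : l s₂ ≤ l T := hl.monotone hle
  have hd1 : (0:ℝ) < s₂ - s₁ := by linarith
  have hd2 : (0:ℝ) < l s₂ - l s₁ := by linarith
  have hd3 : (0:ℝ) < m (l s₂) - m (l s₁) := by have := hm hllt; linarith
  have e1 := h₁ s₁ s₂ hs₁ hlt hle
  have e2 := h₂ (l s₁) (l s₂) hls₁ hllt hlle
  have key : ((m ∘ l) s₂ - (m ∘ l) s₁) / (s₂ - s₁)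
      = ((m (l s₂) - m (l s₁)) / (l s₂ - l s₁)) * ((l s₂ - l s₁) / (s₂ - s₁)) := by
    field_simp
    rfl
  rw [key, Real.log_mul (by positivity) (by positivity)]
  calc |Real.log ((m (l s₂) - m (l s₁)) / (l s₂ - l s₁)) + Real.log ((l s₂ - l s₁) / (s₂ - s₁))|
      ≤ |Real.log ((m (l s₂) - m (l s₁)) / (l s₂ - l s₁))| +
        |Real.log ((l s₂ - l s₁) / (s₂ - s₁))| := abs_add_le _ _
    _ ≤ C₂ + C₁ := add_le_add e2 e1
    _ = C₁ + C₂ := add_comm _ _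

lemma timeBij_cond (u : Bool) (l : ℝ → ℝ) :
    (if u then IsLipTimeBij l else IsTimeBij l) ↔
      (IsTimeBij l ∧ (u = true → ∀ T : ℝ, 0 < T → ∃ C : ℝ, LogSlopeLe l T C)) := by
  cases u <;> simp [IsLipTimeBij]

open Classical in
lemma pen_coe {t : ℝ} {K : Set S} {x : Path S} {t₁ : ℝ} {a : S} (hx : x t₁ = (a : OnePoint S)) :
    pen dist t K x t₁ = (if (Kᶜ : Set S).Nonempty then
      min (sInf ((fun b => dist a b) '' (Kᶜ : Set S))) (max (t - t₁) 0) else max (t - t₁) 0) := by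
  simp only [pen, hx]
  rfl

lemma pen_infty {t : ℝ} {K : Set S} {x : Path S} {t₁ : ℝ} (h : x t₁ = OnePoint.infty) :
    pen dist t K x t₁ = 0 := by
  simp only [pen, h]
  rfl

lemma pen_le_max {t : ℝ} {K : Set S} (x : Path S) (t₁ : ℝ) :
    pen dist t K x t₁ ≤ max (t - t₁) 0 := by
  rcases hx : x t₁ with _ | a
  · rw [pen_infty hx]
    exact le_max_right _ _
  · rw [pen_coe hx]
    split_ifs
    · exact min_le_right _ _
    · exact le_rfl

lemma pen_trans {t : ℝ} {K : Set S} {x y : Path S} {t₁ u₂ r₁ r₂ : ℝ} {a b : S}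
    (hx : x t₁ = (a : OnePoint S)) (hy : y u₂ = (b : OnePoint S))
    (hd : dist a b ≤ r₁) (hid : |u₂ - t₁| ≤ r₁)
    (hpen : pen dist t K y u₂ ≤ r₂) : pen dist t K x t₁ ≤ r₁ + r₂ := by
  have hmax : max (t - t₁) 0 ≤ max (t - u₂) 0 + |u₂ - t₁| := by
    rcases abs_cases (u₂ - t₁) with ⟨h1, _⟩ | ⟨h1, _⟩ <;>
      rcases max_cases (t - u₂) 0 with ⟨h2, _⟩ | ⟨h2, _⟩ <;>
      rcases max_cases (t - t₁) 0 with ⟨h3, _⟩ | ⟨h3, _⟩ <;> linarith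
  rw [pen_coe hx]
  rw [pen_coe hy] at hpen
  by_cases hne : (Kᶜ : Set S).Nonempty
  · rw [if_pos hne]
    rw [if_pos hne] at hpen
    rcases min_le_iff.mp hpen with h | h
    · refine le_trans (min_le_left _ _) ?_
      have hbdd : BddBelow ((fun c => dist a c) '' (Kᶜ : Set S)) :=
        ⟨0, by rintro v ⟨c, _, rfl⟩; exact dist_nonneg⟩
      have hle : sInf ((fun c => dist a c) '' (Kᶜ : Set S)) - dist a b
          ≤ sInf ((fun c => dist b c) '' (Kᶜ : Set S)) := by
        apply le_csInf (hne.image _)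
        rintro v ⟨c, hc, rfl⟩
        have h1 : sInf ((fun c => dist a c) '' (Kᶜ : Set S)) ≤ dist a c :=
          csInf_le hbdd ⟨c, hc, rfl⟩
        have := dist_triangle a b c
        linarith
      linarith
    · refine le_trans (min_le_right _ _) ?_
      linarith
  · rw [if_neg hne]
    rw [if_neg hne] at hpen
    linarith

lemma t_mem_rhoSet (u : Bool) {t : ℝ} (ht : 0 ≤ t) (K : Set S) (x y : Path S) :
    t ∈ rhoSet u dist t K x y := by
  refine ⟨ht, 0, 0, id, le_rfl, le_rfl, rfl, ?_, ?_, ?_, ?_, ?_, ?_, ?_, ?_⟩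
  · rw [timeBij_cond]; exact ⟨isLipTimeBij_id.1, fun _ => isLipTimeBij_id.2⟩
  · intro s hs h; linarith
  · intro s hs h; linarith
  · intro s hs h; linarith
  · intro s hs hle
    have : s = 0 := le_antisymm hle hs
    simp [this, ht]
  · intro _ s₁ s₂ h1 h2 h3
    exact (logSlopeLe_id 0 s₁ s₂ h1 h2 h3).trans ht
  · refine (pen_le_max x 0).trans ?_
    rw [sub_zero, max_eq_left ht]
  · refine (pen_le_max y 0).trans ?_
    rw [sub_zero, max_eq_left ht]

lemma zero_mem_diag (u : Bool) {t : ℝ} (ht : 0 ≤ t) (K : Set S) {x : Path S} (hx : IsDexp x) :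
    (0:ℝ) ∈ rhoSet u dist t K x x := by
  obtain ⟨t₁, ht₁0, hxlt, hpen⟩ :
      ∃ t₁ : ℝ, 0 ≤ t₁ ∧ (∀ s, 0 ≤ s → s < t₁ → x s ≠ OnePoint.infty) ∧
        pen dist t K x t₁ ≤ 0 := by
    by_cases hE : (xiSet x ∩ Ici (0:ℝ)).Nonempty ∧ sInf (xiSet x ∩ Ici (0:ℝ)) ≤ t
    · set E := xiSet x ∩ Ici (0:ℝ) with hEdef
      have hbdd : BddBelow E := ⟨0, fun s hs => hs.2⟩
      have hclosed : IsClosed E := hx.2.2.1.inter isClosed_Ici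
      have hmem : sInf E ∈ E := hclosed.csInf_mem hE.1 hbdd
      refine ⟨sInf E, hmem.2, ?_, ?_⟩
      · intro s hs hst h
        exact absurd (csInf_le hbdd ⟨h, hs⟩) (not_le.mpr hst)
      · rw [pen_infty hmem.1]
    · push_neg at hE
      refine ⟨t, ht, ?_, ?_⟩
      · intro s hs hst h
        have hsE : s ∈ xiSet x ∩ Ici (0:ℝ) := ⟨h, hs⟩
        have h1 := hE ⟨s, hsE⟩
        have h2 := csInf_le ⟨0, fun s' hs' => hs'.2⟩ hsE
        linarith
      · refine (pen_le_max x t).trans ?_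
        simp
  refine ⟨le_rfl, t₁, t₁, id, ht₁0, ht₁0, rfl, ?_, hxlt, hxlt, ?_, ?_, ?_, hpen, hpen⟩
  · rw [timeBij_cond]; exact ⟨isLipTimeBij_id.1, fun _ => isLipTimeBij_id.2⟩
  · intro s hs hst; exact (dd_self' (x s)).le
  · intro s hs hst; simp
  · intro _; exact logSlopeLe_id t₁

lemma rhoSet_symm {u : Bool} {t : ℝ} {K : Set S} {x y : Path S} {r : ℝ}
    (h : r ∈ rhoSet u dist t K x y) : r ∈ rhoSet u dist t K y x := by
  obtain ⟨hr, t₁, t₂, l, ht₁, ht₂, hlt₂, hcond, hxne, hyne, hdd, hid, hlog, hpx, hpy⟩ := h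
  rw [timeBij_cond] at hcond
  obtain ⟨⟨hmono, hsurj, hfix⟩, hlip⟩ := hcond
  set e : ℝ ≃o ℝ := StrictMono.orderIsoOfSurjective l hmono hsurj with he
  set l' : ℝ → ℝ := fun s => e.symm s with hl'def
  have hll' : ∀ s, l (l' s) = s := fun s => e.apply_symm_apply s
  have hl'l : ∀ s, l' (l s) = s := fun s => e.symm_apply_apply s
  have hmono' : StrictMono l' := fun a b hab => e.symm.strictMono hab
  have hsurj' : Function.Surjective l' := e.symm.surjective
  have hfix' : ∀ s ≤ (0:ℝ), l' s = s := fun s hs => by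
    conv_lhs => rw [← hfix s hs]
    exact hl'l s
  have hl'0 : l' 0 = 0 := hfix' 0 le_rfl
  have hl'mono : Monotone l' := hmono'.monotone
  have hl't₂ : l' t₂ = t₁ := by rw [← hlt₂]; exact hl'l t₁
  have key : ∀ T C, LogSlopeLe l (l' T) C → LogSlopeLe l' T C := by
    intro T C h s₁ s₂ hs₁ hlt hle
    have hw₁ : (0:ℝ) ≤ l' s₁ := by rw [← hl'0]; exact hl'mono hs₁
    have hw : l' s₁ < l' s₂ := hmono' hlt
    have hwT : l' s₂ ≤ l' T := hl'mono hle
    have hthis := h (l' s₁) (l' s₂) hw₁ hw hwT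
    rw [hll', hll'] at hthis
    have heq : (l' s₂ - l' s₁) / (s₂ - s₁) = ((s₂ - s₁) / (l' s₂ - l' s₁))⁻¹ := by
      rw [inv_div]
    rw [heq, Real.log_inv, abs_neg]
    exact hthis
  refine ⟨hr, t₂, t₁, l', ht₂, ht₁, hl't₂, ?_, hyne, hxne, ?_, ?_, ?_, hpy, hpx⟩
  · rw [timeBij_cond]
    refine ⟨⟨hmono', hsurj', hfix'⟩, fun hu T hT => ?_⟩
    obtain ⟨C, hC⟩ := hlip hu (l' T) (by rw [← hl'0]; exact hmono' hT)
    exact ⟨C, key T C hC⟩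
  · intro s hs hst
    have hw₁ : (0:ℝ) ≤ l' s := by rw [← hl'0]; exact hl'mono hs
    have hw : l' s < t₁ := by rw [← hl't₂]; exact hmono' hst
    have hthis := hdd (l' s) hw₁ hw
    rw [hll'] at hthis
    rw [dd_comm']
    exact hthis
  · intro s hs hst
    have hw₁ : (0:ℝ) ≤ l' s := by rw [← hl'0]; exact hl'mono hs
    have hw : l' s ≤ t₁ := by rw [← hl't₂]; exact hl'mono hst
    have hthis := hid (l' s) hw₁ hw
    rw [hll'] at hthis
    rwa [abs_sub_comm] at hthis
  · intro hu
    exact key t₂ r (by rw [hl't₂]; exact hlog hu)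

lemma rhoSet_triangle {u : Bool} {t : ℝ} {K : Set S} {x y z : Path S} {r₁ r₂ : ℝ}
    (h₁ : r₁ ∈ rhoSet u dist t K x y) (h₂ : r₂ ∈ rhoSet u dist t K y z) :
    r₁ + r₂ ∈ rhoSet u dist t K x z := by
  obtain ⟨hr₁, t₁, t₂, l, ht₁0, ht₂0, hlt₁, hcond₁, hx₁, hy₁, hdd₁, hid₁, hlog₁, hpx₁, hpy₁⟩ := h₁
  obtain ⟨hr₂, u₂, u₃, m, hu₂0, hu₃0, hmu₂, hcond₂, hy₂, hz₂, hdd₂, hid₂, hlog₂, hpy₂, hpz₂⟩ := h₂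
  rw [timeBij_cond] at hcond₁ hcond₂
  obtain ⟨⟨hlmono, hlsurj, hlfix⟩, hllip⟩ := hcond₁
  obtain ⟨⟨hmmono, hmsurj, hmfix⟩, hmlip⟩ := hcond₂
  have hl0 : l 0 = 0 := hlfix 0 le_rfl
  have hm0 : m 0 = 0 := hmfix 0 le_rfl
  set e : ℝ ≃o ℝ := StrictMono.orderIsoOfSurjective l hlmono hlsurj with he
  have hll' : ∀ s, l (e.symm s) = s := fun s => e.apply_symm_apply s
  have hl'l : ∀ s, e.symm (l s) = s := fun s => e.symm_apply_apply s
  have hsymm0 : e.symm (0:ℝ) = 0 := by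
    conv_lhs => rw [← hl0]
    exact hl'l 0
  set T₁ : ℝ := min t₁ (e.symm u₂) with hT₁def
  have h0u₂ : (0:ℝ) ≤ e.symm u₂ := by rw [← hsymm0]; exact e.symm.monotone hu₂0
  have hT₁0 : 0 ≤ T₁ := le_min ht₁0 h0u₂
  have hlT₁ : l T₁ = min t₂ u₂ := by
    rw [hT₁def, hlmono.monotone.map_min, hlt₁, hll']
  set T₃ : ℝ := m (l T₁) with hT₃def
  have hlT₁le_t₂ : l T₁ ≤ t₂ := by rw [hlT₁]; exact min_le_left _ _
  have hlT₁le_u₂ : l T₁ ≤ u₂ := by rw [hlT₁]; exact min_le_right _ _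
  have hlT₁0 : 0 ≤ l T₁ := by rw [← hl0]; exact hlmono.monotone hT₁0
  have hT₃0 : 0 ≤ T₃ := by rw [hT₃def, ← hm0]; exact hmmono.monotone hlT₁0
  have hT₃le : T₃ ≤ u₃ := by rw [hT₃def, ← hmu₂]; exact hmmono.monotone hlT₁le_u₂
  have hT₁le : T₁ ≤ t₁ := min_le_left _ _
  refine ⟨add_nonneg hr₁ hr₂, T₁, T₃, m ∘ l, hT₁0, hT₃0, hT₃def.symm, ?_, ?_, ?_, ?_, ?_,
    ?_, ?_, ?_⟩
  · rw [timeBij_cond]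
    refine ⟨⟨hmmono.comp hlmono, hmsurj.comp hlsurj, fun s hs => ?_⟩, fun hu T hT => ?_⟩
    · show m (l s) = s
      rw [hlfix s hs, hmfix s hs]
    · obtain ⟨C₁, hC₁⟩ := hllip hu T hT
      obtain ⟨C₂, hC₂⟩ := hmlip hu (l T) (by rw [← hl0]; exact hlmono hT)
      exact ⟨C₁ + C₂, logSlopeLe_comp hlmono hmmono hl0 hC₁ hC₂⟩
  · intro s hs hst; exact hx₁ s hs (lt_of_lt_of_le hst hT₁le)
  · intro s hs hst; exact hz₂ s hs (lt_of_lt_of_le hst hT₃le)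
  · intro s hs hst
    have hst₁ : s < t₁ := lt_of_lt_of_le hst hT₁le
    have hls0 : 0 ≤ l s := by rw [← hl0]; exact hlmono.monotone hs
    have hlst₂ : l s < t₂ := by rw [← hlt₁]; exact hlmono hst₁
    have hlsu₂ : l s < u₂ := by
      have h' : s < e.symm u₂ := lt_of_lt_of_le hst (min_le_right _ _)
      have h'' := hlmono h'
      rwa [hll'] at h''
    have hmls : m (l s) < u₃ := by rw [← hmu₂]; exact hmmono hlsu₂
    have hmls0 : 0 ≤ m (l s) := by rw [← hm0]; exact hmmono.monotone hls0
    have hxs := hx₁ s hs hst₁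
    have hys := hy₁ (l s) hls0 hlst₂
    have hzs := hz₂ (m (l s)) hmls0 hmls
    exact (dd_triangle' hxs hys hzs).trans
      (add_le_add (hdd₁ s hs hst₁) (hdd₂ (l s) hls0 hlsu₂))
  · intro s hs hst
    have hls0 : 0 ≤ l s := by rw [← hl0]; exact hlmono.monotone hs
    have hlsu₂ : l s ≤ u₂ := by
      have h' : s ≤ e.symm u₂ := hst.trans (min_le_right _ _)
      have h'' := hlmono.monotone h'
      rwa [hll'] at h''
    have h1 := hid₁ s hs (hst.trans (min_le_left _ _))
    have h2 := hid₂ (l s) hls0 hlsu₂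
    calc |(m ∘ l) s - s| ≤ |m (l s) - l s| + |l s - s| := abs_sub_le _ _ _
      _ ≤ r₂ + r₁ := add_le_add h2 h1
      _ = r₁ + r₂ := add_comm _ _
  · intro hu
    exact logSlopeLe_comp hlmono hmmono hl0 ((hlog₁ hu).mono_left hT₁le)
      ((hlog₂ hu).mono_left hlT₁le_u₂)
  · by_cases hc : t₁ ≤ e.symm u₂
    · have heq : T₁ = t₁ := min_eq_left hc
      rw [heq]
      linarith
    · push_neg at hc
      have hTeq : T₁ = e.symm u₂ := min_eq_right hc.le
      have hT₁lt : T₁ < t₁ := by rw [hTeq]; exact hc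
      have hlT₁u₂ : l T₁ = u₂ := by rw [hTeq, hll']
      have hu₂t₂ : u₂ < t₂ := by rw [← hlT₁u₂, ← hlt₁]; exact hlmono hT₁lt
      obtain ⟨a, ha⟩ := ne_infty_exists (hx₁ T₁ hT₁0 hT₁lt)
      obtain ⟨b, hb⟩ := ne_infty_exists (hy₁ u₂ hu₂0 hu₂t₂)
      have hdab : dist a b ≤ r₁ := by
        have hthis := hdd₁ T₁ hT₁0 hT₁lt
        rwa [hlT₁u₂, ha, hb, dd_coe'] at hthis
      have hidu : |u₂ - T₁| ≤ r₁ := by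
        have hthis := hid₁ T₁ hT₁0 hT₁le
        rwa [hlT₁u₂] at hthis
      exact pen_trans ha hb hdab hidu hpy₂
  · by_cases hc : u₂ ≤ t₂
    · have h1 : l T₁ = u₂ := by rw [hlT₁, min_eq_right hc]
      have h2 : T₃ = u₃ := by rw [hT₃def, h1, hmu₂]
      rw [h2]
      linarith
    · push_neg at hc
      have hlTt₂ : l T₁ = t₂ := by rw [hlT₁, min_eq_left hc.le]
      have hT₃eq : T₃ = m t₂ := by rw [hT₃def, hlTt₂]
      have hT₃lt : T₃ < u₃ := by rw [hT₃eq, ← hmu₂]; exact hmmono hc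
      obtain ⟨c, hcz⟩ := ne_infty_exists (hz₂ T₃ hT₃0 hT₃lt)
      obtain ⟨b, hb⟩ := ne_infty_exists (hy₂ t₂ ht₂0 hc)
      have hdcb : dist c b ≤ r₂ := by
        have hthis := hdd₂ t₂ ht₂0 hc
        rw [hb, ← hT₃eq, hcz, dd_coe'] at hthis
        rwa [dist_comm] at hthis
      have hidc : |t₂ - T₃| ≤ r₂ := by
        have hthis := hid₂ t₂ ht₂0 hc.le
        rw [← hT₃eq] at hthis
        rwa [abs_sub_comm] at hthis
      have := pen_trans hcz hb hdcb hidc hpy₁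
      linarith

end PseudoMetric

/-- Lemma 4.1. For every `0 ≤ t < ∞` and compact `K ⊆ S`, the functions
`ρ̃_{t,K}` and `ρ_{t,K}` are pseudo-metrics on `𝔻_exp(S)`: they are nonnegative, vanish on
the diagonal, are symmetric, and satisfy the triangle inequality. -/
theorem rho_pseudoMetric
    {S : Type*} [MetricSpace S] [SecondCountableTopology S] [LocallyCompactSpace S]
    (t : ℝ) (ht : 0 ≤ t) (K : Set S) (hK : IsCompact K) :
    ((∀ x y : Path S, IsDexp x → IsDexp y → 0 ≤ rhoTilde dist t K x y) ∧
      (∀ x : Path S, IsDexp x → rhoTilde dist t K x x = 0) ∧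
      (∀ x y : Path S, IsDexp x → IsDexp y →
        rhoTilde dist t K x y = rhoTilde dist t K y x) ∧
      (∀ x y z : Path S, IsDexp x → IsDexp y → IsDexp z →
        rhoTilde dist t K x z ≤ rhoTilde dist t K x y + rhoTilde dist t K y z)) ∧
    ((∀ x y : Path S, IsDexp x → IsDexp y → 0 ≤ rhoMet dist t K x y) ∧
      (∀ x : Path S, IsDexp x → rhoMet dist t K x x = 0) ∧
      (∀ x y : Path S, IsDexp x → IsDexp y →
        rhoMet dist t K x y = rhoMet dist t K y x) ∧
      (∀ x y z : Path S, IsDexp x → IsDexp y → IsDexp z →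
        rhoMet dist t K x z ≤ rhoMet dist t K x y + rhoMet dist t K y z)) := by
  have bdd : ∀ (u : Bool) (x y : Path S), BddBelow (rhoSet u dist t K x y) :=
    fun u x y => ⟨0, fun r hr => hr.1⟩
  have nonneg : ∀ (u : Bool) (x y : Path S), 0 ≤ sInf (rhoSet u dist t K x y) :=
    fun u x y => Real.sInf_nonneg (fun r hr => hr.1)
  have diag : ∀ (u : Bool) (x : Path S), IsDexp x → sInf (rhoSet u dist t K x x) = 0 :=
    fun u x hx =>
      le_antisymm (csInf_le (bdd u x x) (zero_mem_diag u ht K hx)) (nonneg u x x)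
  have symm : ∀ (u : Bool) (x y : Path S),
      sInf (rhoSet u dist t K x y) = sInf (rhoSet u dist t K y x) :=
    fun u x y => congrArg sInf (Set.Subset.antisymm (fun r hr => rhoSet_symm hr)
      (fun r hr => rhoSet_symm hr))
  have tri : ∀ (u : Bool) (x y z : Path S), sInf (rhoSet u dist t K x z) ≤
      sInf (rhoSet u dist t K x y) + sInf (rhoSet u dist t K y z) := by
    intro u x y z
    have hne₁ : (rhoSet u dist t K x y).Nonempty := ⟨t, t_mem_rhoSet u ht K x y⟩
    have hne₂ : (rhoSet u dist t K y z).Nonempty := ⟨t, t_mem_rhoSet u ht K y z⟩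
    have key : ∀ r₁ ∈ rhoSet u dist t K x y, ∀ r₂ ∈ rhoSet u dist t K y z,
        sInf (rhoSet u dist t K x z) ≤ r₁ + r₂ :=
      fun r₁ h₁ r₂ h₂ => csInf_le (bdd u x z) (rhoSet_triangle h₁ h₂)
    have h1 : ∀ r₂ ∈ rhoSet u dist t K y z,
        sInf (rhoSet u dist t K x z) - r₂ ≤ sInf (rhoSet u dist t K x y) := by
      intro r₂ h₂
      apply le_csInf hne₁
      intro r₁ hr₁
      have := key r₁ hr₁ r₂ h₂
      linarith
    have h2 : sInf (rhoSet u dist t K x z) - sInf (rhoSet u dist t K x y) ≤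
        sInf (rhoSet u dist t K y z) := by
      apply le_csInf hne₂
      intro r₂ h₂
      have := h1 r₂ h₂
      linarith
    linarith
  unfold rhoTilde rhoMet
  exact ⟨⟨fun x y _ _ => nonneg false x y, fun x hx => diag false x hx,
      fun x y _ _ => symm false x y, fun x y z _ _ _ => tri false x y z⟩,
    ⟨fun x y _ _ => nonneg true x y, fun x hx => diag true x hx,
      fun x y _ _ => symm true x y, fun x y z _ _ _ => tri true x y z⟩⟩


end LocSkor
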